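/- Let 1 ≤ k ≤ n, let F be a field, and let W be the generic k×n matrix over K = Frac(F[x_{i,j} : i ∈ [k], j ∈ [n]]). Then for every generic zero pattern S = (S_1, …, S_k) for k×n matrices, there exists an invertible k×k matrix M over K such that (M·W)_{i,j} = 0 for every i ∈ [k] and every j ∈ S_i. In particular, the generic k×n matrix attains every generic zero pattern, so generic codes are GZP(ℓ) for every ℓ. -/

import Mathlib

/-!
STATEMENT 3: The generic k×n matrix attains every generic zero pattern
(Proposition 2.1 / prop:our-gm-mds).
-/

open MvPolynomial Finset

noncomputable section

/-- `K = Frac(F[x_{i,j} : i ∈ [k], j ∈ [n]])`. -/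
abbrev genK (F : Type*) [Field F] (k n : ℕ) : Type _ :=
  FractionRing (MvPolynomial (Fin k × Fin n) F)

/-- The generic `k × n` matrix `W` with `W i j = x_{i,j}`. -/
noncomputable def genW (F : Type*) [Field F] (k n : ℕ) :
    Matrix (Fin k) (Fin n) (genK F k n) :=
  fun i j => algebraMap (MvPolynomial (Fin k × Fin n) F) (genK F k n) (X (i, j))

/-- `S = (S_1, …, S_k)` is a generic zero pattern: `|∩_{i ∈ I} S_i| ≤ k − |I|` for
every nonempty `I ⊆ [k]`. -/
def IsGenericZP {k n : ℕ} (S : Fin k → Finset (Fin n)) : Prop :=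
  ∀ I : Finset (Fin k), I.Nonempty → (I.inf S).card ≤ k - I.card

/-! ### Auxiliary combinatorial lemmas -/

section Comb

variable {k n : ℕ}

lemma gzp_card_le {S : Fin k → Finset (Fin n)} (hS : IsGenericZP S) (i : Fin k) :
    (S i).card ≤ k - 1 := by
  simpa using hS {i} ⟨i, mem_singleton_self i⟩

lemma tight_inter {S : Fin k → Finset (Fin n)} (hS : IsGenericZP S) {i : Fin k}
    {I I' : Finset (Fin k)} (hi : i ∈ I) (hi' : i ∈ I')
    (hI : (I.inf S).card = k - I.card) (hI' : (I'.inf S).card = k - I'.card) :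
    ((I ∩ I').inf S).card = k - (I ∩ I').card := by
  classical
  have hUinf : ((I ∪ I').inf S) = I.inf S ∩ I'.inf S := by
    rw [Finset.inf_union]; rfl
  have hsub : I.inf S ∪ I'.inf S ⊆ (I ∩ I').inf S :=
    Finset.union_subset (Finset.inf_mono Finset.inter_subset_left)
      (Finset.inf_mono Finset.inter_subset_right)
  have h1 : (I.inf S ∪ I'.inf S).card ≤ ((I ∩ I').inf S).card := Finset.card_le_card hsub
  have h2 : (I.inf S ∪ I'.inf S).card + (I.inf S ∩ I'.inf S).card
      = (I.inf S).card + (I'.inf S).card := Finset.card_union_add_card_inter _ _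
  have h3 : (I ∪ I').card + (I ∩ I').card = I.card + I'.card := Finset.card_union_add_card_inter _ _
  have h4 : ((I ∪ I').inf S).card ≤ k - (I ∪ I').card :=
    hS _ ⟨i, Finset.mem_union_left _ hi⟩
  have h5 : ((I ∩ I').inf S).card ≤ k - (I ∩ I').card :=
    hS _ ⟨i, Finset.mem_inter.mpr ⟨hi, hi'⟩⟩
  have h6 : (I ∪ I').card ≤ k := by simpa using Finset.card_le_univ (I ∪ I')
  have h7 : (I ∩ I').card ≤ k := by simpa using Finset.card_le_univ (I ∩ I')
  have h8 : I.card ≤ k := by simpa using Finset.card_le_univ I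
  have h9 : I'.card ≤ k := by simpa using Finset.card_le_univ I'
  rw [hUinf] at h4
  omega

lemma inf'_prop {α β : Type*} [SemilatticeInf β] {P : β → Prop}
    (h2 : ∀ x y, P x → P y → P (x ⊓ y)) :
    ∀ (s : Finset α) (hs : s.Nonempty) (f : α → β), (∀ a ∈ s, P (f a)) → P (s.inf' hs f) := by
  intro s
  induction s using Finset.cons_induction with
  | empty => intro hs; simp at hs
  | cons a s ha ih =>
    intro hs f h1
    rcases s.eq_empty_or_nonempty with rfl | hsne
    · simpa using h1 a (by simp)
    · rw [Finset.inf'_cons (H := hsne)]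
      exact h2 _ _ (h1 a (by simp)) (ih hsne f (fun b hb => h1 b (by simp [hb])))

lemma key_tight {S : Fin k → Finset (Fin n)} (hS : IsGenericZP S) {i : Fin k} {j : Fin n}
    (hj : j ∉ S i)
    (hbad : ¬ IsGenericZP (Function.update S i (insert j (S i)))) :
    ∃ I : Finset (Fin k), i ∈ I ∧ (I.inf S).card = k - I.card ∧ j ∈ (I.erase i).inf S := by
  classical
  unfold IsGenericZP at hbad
  push_neg at hbad
  obtain ⟨I, hne, hgt⟩ := hbad
  set S' := Function.update S i (insert j (S i)) with hS'
  have hiI : i ∈ I := by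
    by_contra hiI
    have : I.inf S' = I.inf S := Finset.inf_congr rfl (fun t ht => by
      have htne : t ≠ i := fun h => hiI (h ▸ ht)
      simp [hS', Function.update_of_ne htne])
    rw [this] at hgt
    exact absurd (hS I hne) (not_le.mpr hgt)
  set B := (I.erase i).inf S with hB
  have hBS' : (I.erase i).inf S' = B := Finset.inf_congr rfl (fun t ht => by
    simp [hS', Function.update_of_ne (Finset.ne_of_mem_erase ht)])
  have hinf' : I.inf S' = insert j (S i) ∩ B := by
    conv_lhs => rw [← Finset.insert_erase hiI]
    rw [Finset.inf_insert, hBS']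
    simp [hS', Finset.inf_eq_inter]
  have hinf : I.inf S = S i ∩ B := by
    conv_lhs => rw [← Finset.insert_erase hiI]
    rw [Finset.inf_insert]
    simp [Finset.inf_eq_inter, hB]
  have hjB : j ∈ B := by
    by_contra hjB
    have : insert j (S i) ∩ B = S i ∩ B := by
      ext x
      simp only [Finset.mem_inter, Finset.mem_insert]
      constructor
      · rintro ⟨hx | hx, hxB⟩
        · exact absurd (hx ▸ hxB) hjB
        · exact ⟨hx, hxB⟩
      · exact fun ⟨hx, hxB⟩ => ⟨Or.inr hx, hxB⟩
    rw [hinf', this, ← hinf] at hgt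
    exact absurd (hS I hne) (not_le.mpr hgt)
  have hins : insert j (S i) ∩ B = insert j (S i ∩ B) := by
    ext x
    simp only [Finset.mem_inter, Finset.mem_insert]
    constructor
    · rintro ⟨hx | hx, hxB⟩
      · exact Or.inl hx
      · exact Or.inr ⟨hx, hxB⟩
    · rintro (rfl | ⟨hx, hxB⟩)
      · exact ⟨Or.inl rfl, hjB⟩
      · exact ⟨Or.inr hx, hxB⟩
  have hcard' : (I.inf S').card = (I.inf S).card + 1 := by
    rw [hinf', hins, hinf]
    exact Finset.card_insert_of_notMem (fun hx => hj (Finset.mem_inter.mp hx).1)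
  have hle := hS I hne
  refine ⟨I, hiI, ?_, hjB⟩
  omega

lemma exists_insert {S : Fin k → Finset (Fin n)} (hS : IsGenericZP S) (hkn : k ≤ n)
    {i : Fin k} (hcard : (S i).card + 1 < k) :
    ∃ j, j ∉ S i ∧ IsGenericZP (Function.update S i (insert j (S i))) := by
  classical
  by_contra hcon
  push_neg at hcon
  have key : ∀ j : Fin n, j ∉ S i → ∃ I : Finset (Fin k), i ∈ I ∧
      (I.inf S).card = k - I.card ∧ j ∈ (I.erase i).inf S :=
    fun j hj => key_tight hS hj (hcon j hj)
  have hSin : (S i).card ≤ n := by simpa using Finset.card_le_univ (S i)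
  -- there exists some j ∉ S i
  have hSine : ∃ j, j ∉ S i := by
    by_contra h
    push_neg at h
    have h1 : (S i) = Finset.univ := Finset.eq_univ_iff_forall.mpr h
    have h2 : (S i).card = n := by rw [h1]; simp
    omega
  -- the collection of tight sets containing i
  set P : Finset (Fin k) → Prop := fun I => i ∈ I ∧ (I.inf S).card = k - I.card with hP
  set C : Finset (Finset (Fin k)) := Finset.univ.filter P with hC
  have hCne : C.Nonempty := by
    obtain ⟨j, hj⟩ := hSine
    obtain ⟨I, h1, h2, _⟩ := key j hj
    exact ⟨I, by simp [hC, hP, h1, h2]⟩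
  set I₀ : Finset (Fin k) := C.inf' hCne id with hI₀
  have hclosed : ∀ x y : Finset (Fin k), P x → P y → P (x ⊓ y) := by
    intro x y hx hy
    rw [Finset.inf_eq_inter]
    exact ⟨Finset.mem_inter.mpr ⟨hx.1, hy.1⟩, tight_inter hS hx.1 hy.1 hx.2 hy.2⟩
  have hPI₀ : P I₀ := inf'_prop hclosed C hCne id
    (fun a ha => (Finset.mem_filter.mp ha).2)
  have hI₀le : ∀ b : Finset (Fin k), P b → I₀ ⊆ b := by
    intro b hb
    exact Finset.le_iff_subset.mp
      (Finset.inf'_le id (Finset.mem_filter.mpr ⟨Finset.mem_univ b, hb⟩))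
  set A : Finset (Fin n) := (I₀.erase i).inf S with hA
  -- every j not in S i lies in A
  have hjA : ∀ j : Fin n, j ∉ S i → j ∈ A := by
    intro j hj
    obtain ⟨I, h1, h2, h3⟩ := key j hj
    have hsub : I₀.erase i ⊆ I.erase i := Finset.erase_subset_erase _ (hI₀le I ⟨h1, h2⟩)
    exact Finset.le_iff_subset.mp (Finset.inf_mono hsub) h3
  -- I₀.erase i is nonempty
  have hiI₀ : i ∈ I₀ := hPI₀.1
  have hIcard : I₀.card ≤ k := by simpa using Finset.card_le_univ I₀
  have hIne : (I₀.erase i).Nonempty := by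
    rcases Finset.eq_empty_or_nonempty (I₀.erase i) with he | hne
    · exfalso
      have : I₀ = {i} := by
        ext x
        constructor
        · intro hx
          rcases eq_or_ne x i with rfl | hxi
          · simp
          · exact absurd (Finset.mem_erase.mpr ⟨hxi, hx⟩) (by simp [he])
        · intro hx
          rw [Finset.mem_singleton] at hx
          exact hx ▸ hiI₀
      have htight := hPI₀.2
      rw [this] at htight
      simp at htight
      omega
    · exact hne
  -- counting
  have hAcard : ((Finset.univ \ S i) ∪ I₀.inf S).card ≤ A.card := by
    apply Finset.card_le_card
    apply Finset.union_subset
    · intro x hx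
      exact hjA x (Finset.mem_sdiff.mp hx).2
    · exact Finset.le_iff_subset.mp (Finset.inf_mono (Finset.erase_subset _ _))
  have hdisj : Disjoint (Finset.univ \ S i) (I₀.inf S) := by
    apply Finset.disjoint_left.mpr
    intro x hx hx'
    exact (Finset.mem_sdiff.mp hx).2 (Finset.le_iff_subset.mp (Finset.inf_le hiI₀) hx')
  have hucard : ((Finset.univ \ S i) ∪ I₀.inf S).card
      = (n - (S i).card) + (I₀.inf S).card := by
    rw [Finset.card_union_of_disjoint hdisj, Finset.card_sdiff_of_subset (Finset.subset_univ _)]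
    simp
  have hgzp : A.card ≤ k - (I₀.erase i).card := hS _ hIne
  have hecard : (I₀.erase i).card = I₀.card - 1 := Finset.card_erase_of_mem hiI₀
  have htight := hPI₀.2
  have hI₀pos : 1 ≤ I₀.card := Finset.card_pos.mpr ⟨i, hiI₀⟩
  omega

lemma exists_full_extension (hkn : k ≤ n) (S : Fin k → Finset (Fin n)) (hS : IsGenericZP S) :
    ∃ T : Fin k → Finset (Fin n), (∀ i, S i ⊆ T i) ∧ (∀ i, (T i).card = k - 1) ∧
      IsGenericZP T := by
  classical
  suffices h : ∀ (d : ℕ) (S : Fin k → Finset (Fin n)), IsGenericZP S →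
      (∑ i, (k - 1 - (S i).card)) = d →
      ∃ T, (∀ i, S i ⊆ T i) ∧ (∀ i, (T i).card = k - 1) ∧ IsGenericZP T by
    exact h _ S hS rfl
  intro d
  induction d using Nat.strong_induction_on with
  | _ d ih =>
    intro S hS hd
    by_cases hall : ∀ i, (S i).card = k - 1
    · exact ⟨S, fun i => Finset.Subset.refl _, hall, hS⟩
    · push_neg at hall
      obtain ⟨i, hi⟩ := hall
      have hle := gzp_card_le hS i
      have hkpos : 0 < k := i.pos
      have hlt : (S i).card + 1 < k := by omega
      obtain ⟨j, hj, hS'⟩ := exists_insert hS hkn hlt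
      set S' := Function.update S i (insert j (S i)) with hS'def
      have hcard' : ∀ t, (S' t).card = if t = i then (S t).card + 1 else (S t).card := by
        intro t
        rcases eq_or_ne t i with rfl | ht
        · simp [hS'def, Finset.card_insert_of_notMem hj]
        · simp [hS'def, Function.update_of_ne ht, ht]
      have hsum : (∑ t, (k - 1 - (S' t).card)) < d := by
        rw [← hd]
        apply Finset.sum_lt_sum
        · intro t _
          rw [hcard' t]
          split <;> omega
        · refine ⟨i, Finset.mem_univ i, ?_⟩
          rw [hcard' i, if_pos rfl]
          omega
      obtain ⟨T, hT1, hT2, hT3⟩ := ih _ hsum S' hS' rfl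
      refine ⟨T, fun t => ?_, hT2, hT3⟩
      rcases eq_or_ne t i with rfl | ht
      · exact (Finset.subset_insert j (S t)).trans (by simpa [hS'def] using hT1 t)
      · simpa [hS'def, Function.update_of_ne ht] using hT1 t

end Comb

/-! ### Auxiliary polynomial lemmas -/

section Poly

variable {F : Type*} [Field F] {σ : Type*}

lemma prod_X_eq_monomial {m : ℕ} (a : Fin m → σ) :
    (∏ t, (X (a t) : MvPolynomial σ F)) =
      monomial (∑ t, Finsupp.single (a t) 1) 1 := by
  induction m with
  | zero => simp
  | succ m ih =>
    rw [Fin.prod_univ_succ, Fin.sum_univ_succ, ih (fun t => a t.succ),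
      X, monomial_mul, one_mul]

lemma det_ne_zero_of_distinct_vars {m : ℕ}
    (v : Fin m → Fin m → σ)
    (hv : Function.Injective fun p : Fin m × Fin m => v p.1 p.2)
    (A : Matrix (Fin m) (Fin m) (MvPolynomial σ F))
    (hA : ∀ t j, A t j = X (v t j) ∨ A t j = 0)
    (π : Equiv.Perm (Fin m)) (hπ : ∀ t, A t (π t) = X (v t (π t))) :
    A.det ≠ 0 := by
  classical
  set μ : σ →₀ ℕ := ∑ t, Finsupp.single (v t (π t)) 1 with hμ
  have hpair : ∀ (t j t' j' : Fin m), v t j = v t' j' → t = t' ∧ j = j' := by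
    intro t j t' j' h
    have := hv (a₁ := (t, j)) (a₂ := (t', j')) h
    exact ⟨congrArg Prod.fst this, congrArg Prod.snd this⟩
  have hcoeff : MvPolynomial.coeff μ A.det = ((Equiv.Perm.sign π⁻¹ : ℤ) : F) := by
    rw [Matrix.det_apply', MvPolynomial.coeff_sum]
    rw [Finset.sum_eq_single π⁻¹]
    · have hall : ∀ i, A (π⁻¹ i) i = X (v (π⁻¹ i) i) := by
        intro i
        simpa using hπ (π⁻¹ i)
      have hkey : μ = ∑ t, Finsupp.single (v (π⁻¹ t) t) 1 := by
        rw [hμ, ← Equiv.sum_comp π (fun i => Finsupp.single (v (π⁻¹ i) i) 1)]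
        exact Finset.sum_congr rfl fun t _ => by simp
      have hprod : (∏ i, A (π⁻¹ i) i) = monomial μ 1 := by
        rw [Finset.prod_congr rfl (fun i _ => hall i), prod_X_eq_monomial, ← hkey]
      rw [hprod, ← zsmul_eq_mul, MvPolynomial.coeff_smul,
        MvPolynomial.coeff_monomial, if_pos rfl]
      simp
    · intro τ _ hτ
      by_cases hall : ∀ i, A (τ i) i = X (v (τ i) i)
      · have hprod : (∏ i, A (τ i) i) = monomial (∑ i, Finsupp.single (v (τ i) i) 1) 1 := by
          rw [Finset.prod_congr rfl (fun i _ => hall i), prod_X_eq_monomial]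
        have hne : (∑ i, Finsupp.single (v (τ i) i) 1) ≠ μ := by
          intro heq
          apply hτ
          have hpt : ∀ t₀, τ (π t₀) = t₀ := by
            intro t₀
            have happ := DFunLike.congr_fun heq (v t₀ (π t₀))
            rw [Finsupp.finset_sum_apply, Finsupp.finset_sum_apply] at happ
            simp only [Finsupp.single_apply] at happ
            by_contra hcase
            have hLHS : (∑ i, if v (τ i) i = v t₀ (π t₀) then (1:ℕ) else 0) = 0 := by
              apply Finset.sum_eq_zero
              intro i _
              rw [if_neg]
              intro h
              obtain ⟨h1, h2⟩ := hpair _ _ _ _ h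
              exact hcase (h2 ▸ h1)
            have hRHS : (∑ t, if v t (π t) = v t₀ (π t₀) then (1:ℕ) else 0) = 1 := by
              rw [Finset.sum_eq_single t₀]
              · rw [if_pos rfl]
              · intro t _ ht
                rw [if_neg]
                intro h
                exact ht (hpair _ _ _ _ h).1
              · intro h
                simp at h
            rw [hLHS, hRHS] at happ
            exact absurd happ (by norm_num)
          ext i
          have h2 : τ i = π⁻¹ i := by simpa using hpt (π⁻¹ i)
          exact congrArg Fin.val h2
        rw [hprod, ← zsmul_eq_mul, MvPolynomial.coeff_smul,
          MvPolynomial.coeff_monomial, if_neg hne]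
        simp
      · push_neg at hall
        obtain ⟨i, hi⟩ := hall
        have h0 : A (τ i) i = 0 := (hA (τ i) i).resolve_left hi
        rw [Finset.prod_eq_zero (f := fun t => A (τ t) t) (Finset.mem_univ i) h0]
        simp
    · intro h
      simp at h
  intro h
  rw [h] at hcoeff
  simp only [MvPolynomial.coeff_zero] at hcoeff
  rcases Int.units_eq_one_or (Equiv.Perm.sign π⁻¹) with hs | hs <;>
    rw [hs] at hcoeff <;> simp at hcoeff

end Poly

/-! ### The Hall-type matching lemma -/

lemma exists_matching {m n : ℕ} (T : Fin (m + 1) → Finset (Fin n))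
    (hT : IsGenericZP T) (hcard : ∀ i, (T i).card = m) (i : Fin (m + 1)) :
    ∃ f : Fin m → Fin n, Function.Injective f ∧
      ∀ r, f r ∈ T i \ T (i.succAbove r) := by
  classical
  rw [← Finset.all_card_le_biUnion_card_iff_exists_injective
    (fun r => T i \ T (i.succAbove r))]
  intro s
  rcases s.eq_empty_or_nonempty with rfl | hs
  · simp
  · have hBU : s.biUnion (fun r => T i \ T (i.succAbove r))
        = T i \ s.inf' hs (fun r => T (i.succAbove r)) := by
      ext j
      simp only [Finset.mem_biUnion, Finset.mem_sdiff, Finset.mem_inf']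
      constructor
      · rintro ⟨r, hr, hj, hjr⟩
        exact ⟨hj, fun h => hjr (h r hr)⟩
      · rintro ⟨hj, h⟩
        push_neg at h
        obtain ⟨r, hr, hjr⟩ := h
        exact ⟨r, hr, hj, hjr⟩
    set B := s.inf' hs (fun r => T (i.succAbove r)) with hBdef
    set I : Finset (Fin (m + 1)) := insert i (s.image i.succAbove) with hIdef
    have hiI : i ∉ s.image i.succAbove := by
      intro h
      obtain ⟨r, _, hr⟩ := Finset.mem_image.mp h
      exact Fin.succAbove_ne i r hr
    have hIcard : I.card = s.card + 1 := by
      rw [hIdef, Finset.card_insert_of_notMem hiI,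
        Finset.card_image_of_injective _ Fin.succAbove_right_injective]
    have hIinf : I.inf T = T i ∩ B := by
      rw [hIdef, Finset.inf_insert, Finset.inf_image, hBdef,
        ← Finset.inf'_eq_inf hs]
      rfl
    have hgzp : (I.inf T).card ≤ (m + 1) - I.card :=
      hT I ⟨i, Finset.mem_insert_self _ _⟩
    have hsd : (T i \ B).card + (T i ∩ B).card = (T i).card :=
      Finset.card_sdiff_add_card_inter _ _
    have hsm : s.card ≤ m := by simpa using Finset.card_le_univ s
    rw [hBU]
    rw [hIinf] at hgzp
    have := hcard i
    omega

/-- The generic matrix attains every generic zero pattern: there is an invertible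
matrix `M` over `K` with `(M·W) i j = 0` for every `i ∈ [k]`, `j ∈ S i`. -/
theorem generic_attains_every_gzp (F : Type*) [Field F] (k n : ℕ)
    (hk : 1 ≤ k) (hkn : k ≤ n)
    (S : Fin k → Finset (Fin n)) (hS : IsGenericZP S) :
    ∃ M : Matrix (Fin k) (Fin k) (genK F k n), IsUnit M.det ∧
      ∀ i j, j ∈ S i → (M * genW F k n) i j = 0 := by
  classical
  obtain ⟨m, rfl⟩ : ∃ m, k = m + 1 := ⟨k - 1, by omega⟩
  obtain ⟨T, hST, hTcard, hT⟩ := exists_full_extension hkn S hS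
  have hTcard' : ∀ i, (T i).card = m := by
    intro i; have := hTcard i; omega
  set R := MvPolynomial (Fin (m + 1) × Fin n) F with hR
  set K := genK F (m + 1) n with hK
  set e : Fin (m + 1) → Fin m → Fin n :=
    fun i l => (((T i).orderIsoOfFin (hTcard' i)) l : Fin n) with he
  have he_mem : ∀ i l, e i l ∈ T i := fun i l => (((T i).orderIsoOfFin (hTcard' i)) l).2
  have he_inj : ∀ i, Function.Injective (e i) := by
    intro i a b hab
    have := Subtype.ext (p := fun x => x ∈ T i) hab
    exact ((T i).orderIsoOfFin (hTcard' i)).injective this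
  have he_surj : ∀ i j, j ∈ T i → ∃ l, e i l = j := by
    intro i j hj
    refine ⟨((T i).orderIsoOfFin (hTcard' i)).symm ⟨j, hj⟩, ?_⟩
    show ((((T i).orderIsoOfFin (hTcard' i))
      ((((T i).orderIsoOfFin (hTcard' i))).symm ⟨j, hj⟩) : T i) : Fin n) = j
    rw [OrderIso.apply_symm_apply]
  set P : Matrix (Fin (m + 1)) (Fin (m + 1)) R := fun i t =>
    (-1) ^ (t : ℕ) *
      Matrix.det (Matrix.of fun (r l : Fin m) => (X (t.succAbove r, e i l) : R)) with hP
  -- the key zero property,: ∑ t, P i t * X (t, j) = 0 for j ∈ T i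
  have hzero : ∀ i j, j ∈ T i → (∑ t, P i t * X (t, j)) = 0 := by
    intro i j hj
    set B : Matrix (Fin (m + 1)) (Fin (m + 1)) R :=
      Matrix.of fun t c => Fin.cases (X (t, j)) (fun l => (X (t, e i l) : R)) c with hBdef
    have hB0 : ∀ t, B t 0 = X (t, j) := fun t => rfl
    have hBsub : ∀ t : Fin (m + 1),
        B.submatrix t.succAbove Fin.succ
          = Matrix.of fun (r l : Fin m) => (X (t.succAbove r, e i l) : R) := by
      intro t
      ext r l
      simp [hBdef, Matrix.submatrix_apply]
    have hdet : B.det = ∑ t, P i t * X (t, j) := by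
      rw [Matrix.det_succ_column_zero]
      refine Finset.sum_congr rfl fun t _ => ?_
      rw [hB0, hBsub, hP]
      ring
    obtain ⟨l₀, hl₀⟩ := he_surj i j hj
    have hcol : B.det = 0 := by
      apply Matrix.det_zero_of_column_eq (i := (0 : Fin (m + 1))) (j := Fin.succ l₀)
      · exact (Fin.succ_ne_zero l₀).symm
      · intro t
        show (X (t, j) : R) = X (t, e i l₀)
        rw [hl₀]
    rw [← hdet, hcol]
  -- nonvanishing of the determinant of P
  have hdetP : P.det ≠ 0 := by
    set g : Fin (m + 1) × Fin n → R := fun p => if p.2 ∈ T p.1 then 0 else X p with hg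
    set φ : R →ₐ[F] R := aeval g with hφ
    set Q : Matrix (Fin (m + 1)) (Fin (m + 1)) R := fun i t =>
      (-1) ^ (t : ℕ) *
        Matrix.det (Matrix.of fun (r l : Fin m) => g (t.succAbove r, e i l)) with hQ
    have hmapX : ∀ i t : Fin (m + 1),
        (Matrix.of fun (r l : Fin m) => (X (t.succAbove r, e i l) : R)).map φ
          = Matrix.of fun (r l : Fin m) => g (t.succAbove r, e i l) := by
      intro i t
      refine Matrix.ext fun r l => ?_
      show φ (X (t.succAbove r, e i l)) = g (t.succAbove r, e i l)
      rw [hφ, aeval_X]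
    have hPQ : P.map ⇑φ = Q := by
      refine Matrix.ext fun i t => ?_
      show φ (P i t) = Q i t
      have h1 : P i t = (-1) ^ (t : ℕ) *
          Matrix.det (Matrix.of fun (r l : Fin m) => (X (t.succAbove r, e i l) : R)) := rfl
      have h2 : Q i t = (-1) ^ (t : ℕ) *
          Matrix.det (Matrix.of fun (r l : Fin m) => g (t.succAbove r, e i l)) := rfl
      rw [h1, h2, map_mul, map_pow, map_neg, map_one]
      congr 1
      rw [AlgHom.map_det]
      exact congrArg Matrix.det (hmapX i t)
    have hQoff : ∀ i t, t ≠ i → Q i t = 0 := by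
      intro i t hti
      obtain ⟨r₀, hr₀⟩ := Fin.exists_succAbove_eq (Ne.symm hti)
      have hz : Matrix.det (Matrix.of fun (r l : Fin m) => g (t.succAbove r, e i l)) = 0 := by
        apply Matrix.det_eq_zero_of_row_eq_zero r₀
        intro l
        show g (t.succAbove r₀, e i l) = 0
        rw [hr₀, hg]
        simp [he_mem i l]
      show (-1) ^ (t : ℕ) *
        Matrix.det (Matrix.of fun (r l : Fin m) => g (t.succAbove r, e i l)) = 0
      rw [hz, mul_zero]
    have hQdiag : ∀ i, Q i i ≠ 0 := by
      intro i
      show (-1) ^ (i : ℕ) *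
        Matrix.det (Matrix.of fun (r l : Fin m) => g (i.succAbove r, e i l)) ≠ 0
      apply mul_ne_zero
      · exact pow_ne_zero _ (neg_ne_zero.mpr one_ne_zero)
      · obtain ⟨f, hfinj, hf⟩ := exists_matching T hT hTcard' i
        have hfT : ∀ r, f r ∈ T i := fun r => (Finset.mem_sdiff.mp (hf r)).1
        have hfnT : ∀ r, f r ∉ T (i.succAbove r) :=
          fun r => (Finset.mem_sdiff.mp (hf r)).2
        set π₀ : Fin m → Fin m :=
          fun r => ((T i).orderIsoOfFin (hTcard' i)).symm ⟨f r, hfT r⟩ with hπ₀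
        have hπ₀inj : Function.Injective π₀ := by
          intro a b hab
          have := ((T i).orderIsoOfFin (hTcard' i)).symm.injective hab
          exact hfinj (congrArg Subtype.val this)
        set π : Equiv.Perm (Fin m) :=
          Equiv.ofBijective π₀ (Finite.injective_iff_bijective.mp hπ₀inj) with hπdef
        have heπ : ∀ r, e i (π r) = f r := by
          intro r
          show (((T i).orderIsoOfFin (hTcard' i)) (π₀ r) : Fin n) = f r
          rw [hπ₀]
          simp
        apply det_ne_zero_of_distinct_vars
          (v := fun r l => (i.succAbove r, e i l))
          (π := π)
        · intro p q hpq
          simp only [Prod.mk.injEq] at hpq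
          exact Prod.ext (Fin.succAbove_right_injective hpq.1) (he_inj i hpq.2)
        · intro r l
          by_cases hmem : e i l ∈ T (i.succAbove r)
          · refine Or.inr ?_
            show (if e i l ∈ T (i.succAbove r) then (0:R)
              else X (i.succAbove r, e i l)) = 0
            rw [if_pos hmem]
          · refine Or.inl ?_
            show (if e i l ∈ T (i.succAbove r) then (0:R)
              else X (i.succAbove r, e i l)) = X (i.succAbove r, e i l)
            rw [if_neg hmem]
        · intro r
          show (if e i (π r) ∈ T (i.succAbove r) then (0:R)
            else X (i.succAbove r, e i (π r))) = X (i.succAbove r, e i (π r))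
          rw [if_neg (by rw [heπ r]; exact hfnT r)]
    have hQdiagonal : Q = Matrix.diagonal (fun i => Q i i) := by
      refine Matrix.ext fun a b => ?_
      rcases eq_or_ne b a with rfl | hab
      · simp
      · rw [Matrix.diagonal_apply_ne' _ hab]
        exact hQoff a b hab
    have hdetQ : Q.det ≠ 0 := by
      rw [hQdiagonal, Matrix.det_diagonal]
      exact Finset.prod_ne_zero_iff.mpr fun i _ => hQdiag i
    intro h
    apply hdetQ
    rw [← hPQ]
    have hmd : (P.map ⇑φ).det = φ P.det := (AlgHom.map_det φ P).symm
    rw [hmd, h, map_zero]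
  -- assemble
  refine ⟨P.map (algebraMap R K), ?_, ?_⟩
  · have hdm : (P.map (algebraMap R K)).det = algebraMap R K P.det :=
      (RingHom.map_det (algebraMap R K) P).symm
    rw [hdm, isUnit_iff_ne_zero]
    intro h
    exact hdetP ((map_eq_zero_iff _ (IsFractionRing.injective R K)).mp h)
  · intro i j hj
    rw [Matrix.mul_apply]
    have : ∀ t, (P.map (algebraMap R K)) i t * genW F (m + 1) n t j
        = algebraMap R K (P i t * X (t, j)) := by
      intro t
      show algebraMap R K (P i t) * algebraMap R K (X (t, j)) = _
      rw [← map_mul]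
    rw [Finset.sum_congr rfl fun t _ => this t, ← map_sum,
      hzero i j (hST i hj), map_zero]

end
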